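/- Let a, b, c be positive integers with b ≥ 2 and a² ≤ c·b², and let f(x) = (c − x)·((a − x)² + b²) + 1. Then f has a real root ω₁ satisfying c < ω₁ ≤ c + 1 and ω₁ < c + (c + 1)/(a² + b² − 1). -/

import Mathlib

theorem cubic_has_real_root_near_c (a b c : ℕ) (ha : 0 < a) (hb : 2 ≤ b) (hc : 0 < c)
    (habc : (a : ℝ) ^ 2 ≤ (c : ℝ) * (b : ℝ) ^ 2)
    (f : ℝ → ℝ)
    (hf : f = fun x => ((c : ℝ) - x) * (((a : ℝ) - x) ^ 2 + (b : ℝ) ^ 2) + 1) :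
    ∃ ω₁ : ℝ, f ω₁ = 0 ∧ (c : ℝ) < ω₁ ∧ ω₁ ≤ (c : ℝ) + 1 ∧
      ω₁ < (c : ℝ) + ((c : ℝ) + 1) / ((a : ℝ) ^ 2 + (b : ℝ) ^ 2 - 1) := by
  have ha' : (1 : ℝ) ≤ (a : ℝ) := by exact_mod_cast ha
  have hb' : (2 : ℝ) ≤ (b : ℝ) := by exact_mod_cast hb
  have hc' : (1 : ℝ) ≤ (c : ℝ) := by exact_mod_cast hc
  have hden : (0 : ℝ) < (a : ℝ) ^ 2 + (b : ℝ) ^ 2 - 1 := by nlinarith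
  set δ : ℝ := ((c : ℝ) + 1) / ((a : ℝ) ^ 2 + (b : ℝ) ^ 2 - 1) with hδ
  have hδpos : 0 < δ := by positivity
  set t : ℝ := min 1 δ with ht
  have htpos : 0 < t := lt_min one_pos hδpos
  have ht1 : t ≤ 1 := min_le_left _ _
  have htδ : t ≤ δ := min_le_right _ _
  have hfc : f c = 1 := by simp [hf]
  have hft : f (c + t) < 0 := by
    rw [hf]
    simp only
    have key : 1 < t * (((a : ℝ) - (c + t)) ^ 2 + (b : ℝ) ^ 2) := by
      rcases le_or_gt δ 1 with h | h
      · have htδ' : t = δ := by rw [ht, min_eq_right h]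
        have h1 : δ * ((a : ℝ) ^ 2 + (b : ℝ) ^ 2 - 1) = (c : ℝ) + 1 := by
          rw [hδ, div_mul_cancel₀ _ hden.ne']
        have h2 : (a : ℝ) ^ 2 + (b : ℝ) ^ 2 - 1 < ((c : ℝ) + 1) * (b : ℝ) ^ 2 := by
          nlinarith
        -- 1 = δ * (a²+b²-1)/(c+1) < δ * b² ≤ δ * ((a-c-δ)²+b²)
        have h3 : (1 : ℝ) < δ * (b : ℝ) ^ 2 := by
          have hc1 : (0 : ℝ) < (c : ℝ) + 1 := by linarith
          rw [hδ]
          rw [div_mul_eq_mul_div, lt_div_iff₀ hden]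
          nlinarith
        rw [htδ']
        nlinarith [sq_nonneg ((a : ℝ) - (c + δ))]
      · have htδ' : t = 1 := by rw [ht, min_eq_left h.le]
        rw [htδ']
        nlinarith [sq_nonneg ((a : ℝ) - (c + 1))]
    nlinarith
  have hcont : ContinuousOn f (Set.Icc (c : ℝ) (c + t)) := by
    rw [hf]; fun_prop
  have h0mem : (0 : ℝ) ∈ Set.Ioo (f (c + t)) (f c) := by
    constructor
    · exact hft
    · rw [hfc]; norm_num
  have hle : (c : ℝ) ≤ c + t := by linarith
  have := intermediate_value_Ioo' hle hcont h0mem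
  obtain ⟨ω, hωmem, hωf⟩ := this
  refine ⟨ω, hωf, hωmem.1, ?_, ?_⟩
  · linarith [hωmem.2]
  · linarith [hωmem.2]
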